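/- Normal operator of the uncoupled photography transform: for f ∈ S(ℝ²ⁿ) (with all integrals absolutely convergent), P̄*P̄ f = K * f where K(x, u) = ∏_{i=1}^n |xᵢ - uᵢ|^{-1}, i.e. P̄*P̄ f(x,u) = ∫_{ℝ²ⁿ} ∏ᵢ |(xᵢ-xᵢ') - (uᵢ-uᵢ')|^{-1} f(x',u') dx' du'. -/

import Mathlib

open MeasureTheory SchwartzMap FourierTransform Real

noncomputable section

abbrev En (n : ℕ) := EuclideanSpace ℝ (Fin n)
abbrev E2n (n : ℕ) := WithLp 2 (En n × En n)

instance (n : ℕ) : MeasureSpace (E2n n) := ⟨(volume : Measure (En n × En n)).map (WithLp.toLp 2)⟩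
instance (n : ℕ) : BorelSpace (E2n n) := inferInstance

/-- The uncoupled photography transform `P̄`, with one parameter `αᵢ` per pair `(xᵢ, uᵢ)`. -/
def photoBar (n : ℕ) (f : E2n n → ℂ) (α : Fin n → ℝ) (xbar : En n) : ℂ :=
  (∏ i, |α i|)⁻¹ •
    ∫ u : En n, f (WithLp.toLp 2 ((WithLp.toLp 2 (fun i => (α i)⁻¹ * xbar i + (1 - (α i)⁻¹) * u i) : En n), u))

/-! ### Auxiliary machinery: diagonal change of variables on `Fin n → ℝ` -/

namespace PhotoAux

open Set

def covS (n : ℕ) : Set (Fin n → ℝ) := {α | ∀ i, α i ≠ 0}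

def covPhi {n : ℕ} (a c : Fin n → ℝ) : (Fin n → ℝ) → (Fin n → ℝ) :=
  fun α i => a i + (1 - (α i)⁻¹) * c i

def covD {n : ℕ} (c : Fin n → ℝ) (α : Fin n → ℝ) : (Fin n → ℝ) →L[ℝ] (Fin n → ℝ) :=
  ContinuousLinearMap.pi
    (fun i => (((α i) ^ 2)⁻¹ * c i) • (ContinuousLinearMap.proj i : (Fin n → ℝ) →L[ℝ] ℝ))

variable {n : ℕ}

lemma ae_ne_pi (b : Fin n → ℝ) : ∀ᵐ w : Fin n → ℝ, ∀ i, w i ≠ b i := by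
  rw [ae_all_iff]
  intro i
  rw [volume_pi]
  exact MeasureTheory.Measure.ae_eval_ne (fun _ : Fin n => (volume : Measure ℝ)) i (b i)

lemma covPhi_image_aux (a c w : Fin n → ℝ) (hc : ∀ i, c i ≠ 0) (hw : ∀ i, w i ≠ a i + c i)
    (i : Fin n) : covPhi a c (fun i => c i / (a i + c i - w i)) i = w i := by
  have h1 : a i + c i - w i ≠ 0 := sub_ne_zero.mpr (Ne.symm (hw i))
  simp only [covPhi]
  rw [inv_div, sub_mul, one_mul, div_mul_cancel₀ _ (hc i)]
  ring

lemma covPhi_deriv (a c : Fin n → ℝ) (α : Fin n → ℝ) (hα : ∀ i, α i ≠ 0) :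
    HasFDerivAt (covPhi a c) (covD c α) α := by
  apply hasFDerivAt_pi''
  intro i
  have h1 : HasDerivAt (fun t : ℝ => a i + (1 - t⁻¹) * c i) (((α i) ^ 2)⁻¹ * c i) (α i) := by
    have := ((hasDerivAt_inv (hα i)).const_sub 1).mul_const (c i)
    simpa using this.const_add (a i)
  have h2 : HasFDerivAt (fun x : Fin n → ℝ => x i)
      (ContinuousLinearMap.proj i : (Fin n → ℝ) →L[ℝ] ℝ) α := hasFDerivAt_apply i α
  have := h1.comp_hasFDerivAt α h2
  exact this

lemma covD_det (c : Fin n → ℝ) (α : Fin n → ℝ) :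
    (covD c α).det = ∏ i, ((α i) ^ 2)⁻¹ * c i := by
  have h : (covD c α : (Fin n → ℝ) →ₗ[ℝ] (Fin n → ℝ)).det = ∏ i, ((α i) ^ 2)⁻¹ * c i := by
    rw [← LinearMap.det_toMatrix (Pi.basisFun ℝ (Fin n))]
    have : (LinearMap.toMatrix (Pi.basisFun ℝ (Fin n)) (Pi.basisFun ℝ (Fin n))
        (covD c α : (Fin n → ℝ) →ₗ[ℝ] (Fin n → ℝ)))
          = Matrix.diagonal (fun i => ((α i) ^ 2)⁻¹ * c i) := by
      ext i j
      simp [LinearMap.toMatrix_apply, covD, Matrix.diagonal, Pi.single_apply, eq_comm]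
    rw [this, Matrix.det_diagonal]
  exact h

lemma covS_meas : MeasurableSet (covS n) := by
  have : covS n = ⋂ i, (fun α : Fin n → ℝ => α i) ⁻¹' {0}ᶜ := by ext α; simp [covS]
  rw [this]
  exact MeasurableSet.iInter fun i => (measurable_pi_apply i) (measurableSet_singleton 0).compl

lemma covPhi_injOn (a c : Fin n → ℝ) (hc : ∀ i, c i ≠ 0) : InjOn (covPhi a c) (covS n) := by
  intro α hα β hβ h
  funext i
  have h0 := congrFun h i
  simp only [covPhi, add_right_inj] at h0
  have h2 : (1 - (α i)⁻¹) = (1 - (β i)⁻¹) := mul_right_cancel₀ (hc i) h0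
  have : (α i)⁻¹ = (β i)⁻¹ := by linarith
  exact inv_injective this

lemma covPhi_image (a c : Fin n → ℝ) (hc : ∀ i, c i ≠ 0) :
    covPhi a c '' covS n = {w | ∀ i, w i ≠ a i + c i} := by
  ext w
  constructor
  · rintro ⟨α, hα, rfl⟩ i
    simp only [covPhi]
    intro h
    have h2 : (1 - (α i)⁻¹) * c i = c i := by linarith
    have h3 : (1 - (α i)⁻¹) = 1 := mul_right_cancel₀ (hc i) (by rw [h2, one_mul])
    have h4 : (α i)⁻¹ = 0 := by linarith
    exact hα i (inv_eq_zero.mp h4)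
  · intro hw
    refine ⟨fun i => c i / (a i + c i - w i), fun i => ?_,
      funext fun i => covPhi_image_aux a c w hc hw i⟩
    have : a i + c i - w i ≠ 0 := sub_ne_zero.mpr (Ne.symm (hw i))
    exact div_ne_zero (hc i) this

lemma cov_key (a c : Fin n → ℝ) (hc : ∀ i, c i ≠ 0) (α : Fin n → ℝ) (hα : α ∈ covS n) :
    |(covD c α).det| * (∏ i, |(a i - covPhi a c α i) + c i|⁻¹) = (∏ i, |α i|)⁻¹ := by
  rw [covD_det, Finset.abs_prod, ← Finset.prod_mul_distrib, ← Finset.prod_inv_distrib]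
  refine Finset.prod_congr rfl fun i _ => ?_
  have hpt : a i - covPhi a c α i + c i = (α i)⁻¹ * c i := by
    simp only [covPhi]; ring
  rw [hpt]
  simp only [abs_mul, abs_inv, abs_pow]
  have h1 : |α i| ≠ 0 := abs_ne_zero.mpr (hα i)
  have h2 : |c i| ≠ 0 := abs_ne_zero.mpr (hc i)
  rw [mul_inv, inv_inv, sq]
  field_simp

lemma cov_main {F : Type*} [NormedAddCommGroup F] [NormedSpace ℝ F]
    (a c : Fin n → ℝ) (hc : ∀ i, c i ≠ 0) (g : (Fin n → ℝ) → F) :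
    ∫ w : Fin n → ℝ, (∏ i, |(a i - w i) + c i|⁻¹ : ℝ) • g w
      = ∫ α : Fin n → ℝ, ((∏ i, |α i|)⁻¹ : ℝ) • g (covPhi a c α) := by
  have himg_ae : volume.restrict (covPhi a c '' covS n) = volume := by
    apply Measure.restrict_eq_self_of_ae_mem
    rw [covPhi_image a c hc]
    exact ae_ne_pi (fun i => a i + c i)
  have hS_ae : volume.restrict (covS n) = volume :=
    Measure.restrict_eq_self_of_ae_mem (ae_ne_pi (fun _ => 0))
  calc ∫ w : Fin n → ℝ, (∏ i, |(a i - w i) + c i|⁻¹ : ℝ) • g w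
      = ∫ w in covPhi a c '' covS n, (∏ i, |(a i - w i) + c i|⁻¹ : ℝ) • g w := by
        rw [himg_ae]
    _ = ∫ α in covS n, |(covD c α).det| •
          ((∏ i, |(a i - covPhi a c α i) + c i|⁻¹ : ℝ) • g (covPhi a c α)) :=
        integral_image_eq_integral_abs_det_fderiv_smul volume covS_meas
          (fun α hα => (covPhi_deriv a c α hα).hasFDerivWithinAt) (covPhi_injOn a c hc) _
    _ = ∫ α in covS n, ((∏ i, |α i|)⁻¹ : ℝ) • g (covPhi a c α) := by
        refine setIntegral_congr_fun covS_meas fun α hα => ?_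
        rw [smul_smul, cov_key a c hc α hα]
    _ = ∫ α : Fin n → ℝ, ((∏ i, |α i|)⁻¹ : ℝ) • g (covPhi a c α) := by rw [hS_ae]

lemma cov_main_int {F : Type*} [NormedAddCommGroup F] [NormedSpace ℝ F]
    (a c : Fin n → ℝ) (hc : ∀ i, c i ≠ 0) (g : (Fin n → ℝ) → F)
    (h : Integrable (fun w : Fin n → ℝ => (∏ i, |(a i - w i) + c i|⁻¹ : ℝ) • g w)) :
    Integrable (fun α : Fin n → ℝ => ((∏ i, |α i|)⁻¹ : ℝ) • g (covPhi a c α)) := by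
  have himg_ae : volume.restrict (covPhi a c '' covS n) = volume := by
    apply Measure.restrict_eq_self_of_ae_mem
    rw [covPhi_image a c hc]
    exact ae_ne_pi (fun i => a i + c i)
  have hS_ae : volume.restrict (covS n) = volume :=
    Measure.restrict_eq_self_of_ae_mem (ae_ne_pi (fun _ => 0))
  have h1 : IntegrableOn (fun w : Fin n → ℝ => (∏ i, |(a i - w i) + c i|⁻¹ : ℝ) • g w)
      (covPhi a c '' covS n) := by rw [IntegrableOn, himg_ae]; exact h
  rw [integrableOn_image_iff_integrableOn_abs_det_fderiv_smul volume covS_meas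
    (fun α hα => (covPhi_deriv a c α hα).hasFDerivWithinAt) (covPhi_injOn a c hc)] at h1
  have h2 : IntegrableOn (fun α : Fin n → ℝ => ((∏ i, |α i|)⁻¹ : ℝ) • g (covPhi a c α))
      (covS n) := by
    refine h1.congr_fun (fun α hα => ?_) covS_meas
    beta_reduce
    rw [smul_smul, cov_key a c hc α hα]
  rwa [IntegrableOn, hS_ae] at h2

lemma integral_En_eq {G : Type*} [NormedAddCommGroup G] [NormedSpace ℝ G] (h : En n → G) :
    ∫ x : En n, h x = ∫ y : Fin n → ℝ, h (WithLp.toLp 2 (fun i => y i) : En n) := by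
  have e := (EuclideanSpace.volume_preserving_symm_measurableEquiv_toLp (Fin n)).symm
  rw [← e.integral_comp (MeasurableEquiv.measurableEmbedding _) h]
  rfl


def prodCast (n : ℕ) : (Fin n → ℝ) × (Fin n → ℝ) → E2n n := fun p =>
  WithLp.toLp 2 ((WithLp.toLp 2 (fun i => p.1 i) : En n), (WithLp.toLp 2 (fun i => p.2 i) : En n))

lemma prodCast_pres : MeasurePreserving (prodCast n)
    ((volume : Measure (Fin n → ℝ)).prod (volume : Measure (Fin n → ℝ)))
    (volume : Measure (E2n n)) := by
  have e := (EuclideanSpace.volume_preserving_symm_measurableEquiv_toLp (Fin n)).symm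
  exact ((MeasurableEquiv.toLp 2 (En n × En n)).measurable.measurePreserving
    ((volume : Measure (En n)).prod (volume : Measure (En n)))).comp (e.prod e)

lemma prodCast_emb : MeasurableEmbedding (prodCast n) :=
  (((MeasurableEquiv.toLp 2 (Fin n → ℝ)).prodCongr
    (MeasurableEquiv.toLp 2 (Fin n → ℝ))).trans
      (MeasurableEquiv.toLp 2 (En n × En n))).measurableEmbedding

lemma stepB_transfer (g : E2n n → ℂ) (hg : Integrable g) :
    Integrable (fun p : (Fin n → ℝ) × (Fin n → ℝ) => g (prodCast n p))
      ((volume : Measure (Fin n → ℝ)).prod volume) := by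
  have h' : Integrable g (volume : Measure (E2n n)) := hg
  exact (prodCast_pres.integrable_comp_emb prodCast_emb).mpr h'

lemma stepB_integral (g : E2n n → ℂ) :
    (∫ w : E2n n, g w) =
      ∫ p : (Fin n → ℝ) × (Fin n → ℝ), g (prodCast n p)
        ∂((volume : Measure (Fin n → ℝ)).prod volume) :=
  (prodCast_pres.integral_comp prodCast_emb g).symm

lemma stepA (n : ℕ) (f : E2n n → ℂ) (z : E2n n) (α : Fin n → ℝ) :
    photoBar n f α (WithLp.toLp 2 (fun i => α i * z.ofLp.1 i + (1 - α i) * z.ofLp.2 i) : En n) =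
      ∫ u : Fin n → ℝ, ((∏ i, |α i|)⁻¹ : ℝ) •
        f (WithLp.toLp 2 ((WithLp.toLp 2 (fun i => z.ofLp.1 i + (1 - (α i)⁻¹) * (u i - z.ofLp.2 i)) : En n),
           (WithLp.toLp 2 (fun i => u i) : En n))) := by
  by_cases hα : ∀ i, α i ≠ 0
  · rw [photoBar, integral_smul]
    congr 1
    rw [integral_En_eq]
    refine congrArg (integral volume) (funext fun u => ?_)
    have hpt : ∀ i, (α i)⁻¹ * (α i * z.ofLp.1 i + (1 - α i) * z.ofLp.2 i)
          + (1 - (α i)⁻¹) * u i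
        = z.ofLp.1 i + (1 - (α i)⁻¹) * (u i - z.ofLp.2 i) := by
      intro i
      have key : (α i)⁻¹ * (α i) = 1 := inv_mul_cancel₀ (hα i)
      linear_combination (z.ofLp.1 i - z.ofLp.2 i) * key
    simp only [WithLp.ofLp_toLp, hpt]
  · push_neg at hα
    obtain ⟨i0, h0⟩ := hα
    have hp : (∏ i, |α i|) = 0 :=
      Finset.prod_eq_zero (Finset.mem_univ i0) (by rw [h0, abs_zero])
    rw [photoBar, hp]
    simp only [inv_zero, zero_smul, integral_zero]

end PhotoAux

/-- the normal operator of `P̄` is convolution with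
`∏ᵢ |xᵢ - uᵢ|⁻¹` (under absolute convergence of all the integrals involved). -/
theorem photoBar_normal_operator (n : ℕ) (f : 𝓢(E2n n, ℂ)) (z : E2n n)
    (h1 : Integrable (fun α : Fin n → ℝ =>
      photoBar n (⇑f) α (WithLp.toLp 2 (fun i => α i * z.ofLp.1 i + (1 - α i) * z.ofLp.2 i) : En n)))
    (h2 : Integrable (fun w : E2n n =>
      ((∏ i, |(z.ofLp.1 i - w.ofLp.1 i) - (z.ofLp.2 i - w.ofLp.2 i)|⁻¹ : ℝ)) • f w)) :
    ∫ α : Fin n → ℝ,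
        photoBar n (⇑f) α (WithLp.toLp 2 (fun i => α i * z.ofLp.1 i + (1 - α i) * z.ofLp.2 i) : En n) =
      ∫ w : E2n n, ((∏ i, |(z.ofLp.1 i - w.ofLp.1 i) - (z.ofLp.2 i - w.ofLp.2 i)|⁻¹ : ℝ)) • f w := by
  classical
  -- kernel rewrite helper
  have hkr : ∀ (u x : Fin n → ℝ), (∏ i, |(z.ofLp.1 i - x i) - (z.ofLp.2 i - u i)|⁻¹ : ℝ)
      = ∏ i, |((fun i => z.ofLp.1 i) i - x i) + (fun i => u i - z.ofLp.2 i) i|⁻¹ := by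
    intro u x
    refine Finset.prod_congr rfl fun i _ => ?_
    rw [show (z.ofLp.1 i - x i) - (z.ofLp.2 i - u i) = (fun i => z.ofLp.1 i) i - x i + (fun i => u i - z.ofLp.2 i) i
      from by simp only []; ring]
  -- the integrand in pi-land
  set G : (Fin n → ℝ) × (Fin n → ℝ) → ℂ := fun p =>
    ((∏ i, |(z.ofLp.1 i - p.1 i) - (z.ofLp.2 i - p.2 i)|⁻¹ : ℝ)) • f (PhotoAux.prodCast n p) with hG
  have h2p : Integrable G ((volume : Measure (Fin n → ℝ)).prod volume) := by
    have := PhotoAux.stepB_transfer (fun w : E2n n =>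
      ((∏ i, |(z.ofLp.1 i - w.ofLp.1 i) - (z.ofLp.2 i - w.ofLp.2 i)|⁻¹ : ℝ)) • f w) h2
    exact this
  -- the target integrand after change of variables
  set Fe : (Fin n → ℝ) → (Fin n → ℝ) → ℂ := fun α u =>
    ((∏ i, |α i|)⁻¹ : ℝ) •
      f (WithLp.toLp 2 ((WithLp.toLp 2 (fun i => z.ofLp.1 i + (1 - (α i)⁻¹) * (u i - z.ofLp.2 i)) : En n),
         (WithLp.toLp 2 (fun i => u i) : En n))) with hFe
  -- Step C: pointwise (in good u) change of variables
  have hgood : ∀ u : Fin n → ℝ, (∀ i, u i ≠ z.ofLp.2 i) →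
      (∫ x : Fin n → ℝ, G (x, u)) = ∫ α : Fin n → ℝ, Fe α u := by
    intro u hu
    have hc : ∀ i, (fun i => u i - z.ofLp.2 i) i ≠ 0 := fun i => sub_ne_zero.mpr (hu i)
    have hcov := PhotoAux.cov_main (fun i => z.ofLp.1 i) (fun i => u i - z.ofLp.2 i) hc
      (fun x : Fin n → ℝ => f (PhotoAux.prodCast n (x, u)))
    calc (∫ x : Fin n → ℝ, G (x, u))
        = ∫ x : Fin n → ℝ, (∏ i, |((fun i => z.ofLp.1 i) i - x i) + (fun i => u i - z.ofLp.2 i) i|⁻¹ : ℝ)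
            • f (PhotoAux.prodCast n (x, u)) := by
          refine congrArg (integral volume) (funext fun x => ?_)
          rw [hG]
          simp only []
          rw [hkr u x]
      _ = ∫ α : Fin n → ℝ, ((∏ i, |α i|)⁻¹ : ℝ)
            • f (PhotoAux.prodCast n (PhotoAux.covPhi (fun i => z.ofLp.1 i) (fun i => u i - z.ofLp.2 i) α, u)) :=
          hcov
      _ = ∫ α : Fin n → ℝ, Fe α u := rfl
  -- same for norms
  have hgoodnorm : ∀ u : Fin n → ℝ, (∀ i, u i ≠ z.ofLp.2 i) →
      (∫ x : Fin n → ℝ, ‖G (x, u)‖) = ∫ α : Fin n → ℝ, ‖Fe α u‖ := by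
    intro u hu
    have hc : ∀ i, (fun i => u i - z.ofLp.2 i) i ≠ 0 := fun i => sub_ne_zero.mpr (hu i)
    have hcov := PhotoAux.cov_main (F := ℝ) (fun i => z.ofLp.1 i) (fun i => u i - z.ofLp.2 i) hc
      (fun x : Fin n → ℝ => ‖f (PhotoAux.prodCast n (x, u))‖)
    calc (∫ x : Fin n → ℝ, ‖G (x, u)‖)
        = ∫ x : Fin n → ℝ, (∏ i, |((fun i => z.ofLp.1 i) i - x i) + (fun i => u i - z.ofLp.2 i) i|⁻¹ : ℝ)
            • ‖f (PhotoAux.prodCast n (x, u))‖ := by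
          refine congrArg (integral volume) (funext fun x => ?_)
          rw [hG]
          simp only []
          rw [norm_smul, Real.norm_eq_abs, abs_of_nonneg
            (Finset.prod_nonneg fun i _ => inv_nonneg.mpr (abs_nonneg _)), hkr u x,
            smul_eq_mul]
      _ = ∫ α : Fin n → ℝ, ((∏ i, |α i|)⁻¹ : ℝ)
            • ‖f (PhotoAux.prodCast n (PhotoAux.covPhi (fun i => z.ofLp.1 i) (fun i => u i - z.ofLp.2 i) α, u))‖ :=
          hcov
      _ = ∫ α : Fin n → ℝ, ‖Fe α u‖ := by
          refine congrArg (integral volume) (funext fun α => ?_)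
          rw [hFe]
          simp only []
          rw [norm_smul, Real.norm_eq_abs, abs_of_nonneg
            (inv_nonneg.mpr (Finset.prod_nonneg fun i _ => abs_nonneg _)), smul_eq_mul]
          rfl
  -- measurability of the uncurried target integrand
  have hmeas : AEStronglyMeasurable (fun p : (Fin n → ℝ) × (Fin n → ℝ) => Fe p.1 p.2)
      ((volume : Measure (Fin n → ℝ)).prod volume) := by
    have m1 : Measurable (fun p : (Fin n → ℝ) × (Fin n → ℝ) => ((∏ i, |p.1 i|)⁻¹ : ℝ)) := by
      apply Measurable.inv
      apply Finset.measurable_prod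
      intro i _
      exact ((measurable_pi_apply i).comp measurable_fst).abs
    have m2 : Measurable (fun p : (Fin n → ℝ) × (Fin n → ℝ) =>
        (fun i => z.ofLp.1 i + (1 - (p.1 i)⁻¹) * (p.2 i - z.ofLp.2 i) : Fin n → ℝ)) := by
      apply measurable_pi_lambda
      intro i
      apply Measurable.const_add
      apply Measurable.mul
      · exact measurable_const.sub ((measurable_pi_apply i).comp measurable_fst).inv
      · exact ((measurable_pi_apply i).comp measurable_snd).sub_const _
    have m3 : Measurable (fun p : (Fin n → ℝ) × (Fin n → ℝ) =>
        PhotoAux.prodCast n ((fun i => z.ofLp.1 i + (1 - (p.1 i)⁻¹) * (p.2 i - z.ofLp.2 i) : Fin n → ℝ),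
          p.2)) :=
      PhotoAux.prodCast_emb.measurable.comp (m2.prodMk measurable_snd)
    exact (m1.smul (f.continuous.measurable.comp m3)).aestronglyMeasurable
  -- joint integrability
  have hjoint : Integrable (fun p : (Fin n → ℝ) × (Fin n → ℝ) => Fe p.1 p.2)
      ((volume : Measure (Fin n → ℝ)).prod volume) := by
    rw [integrable_prod_iff' hmeas]
    constructor
    · filter_upwards [h2p.prod_left_ae, PhotoAux.ae_ne_pi (fun i => z.ofLp.2 i)] with u hint hu
      have hc : ∀ i, (fun i => u i - z.ofLp.2 i) i ≠ 0 := fun i => sub_ne_zero.mpr (hu i)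
      have hint' : Integrable (fun x : Fin n → ℝ =>
          (∏ i, |((fun i => z.ofLp.1 i) i - x i) + (fun i => u i - z.ofLp.2 i) i|⁻¹ : ℝ)
            • f (PhotoAux.prodCast n (x, u))) := by
        refine hint.congr (Filter.Eventually.of_forall fun x => ?_)
        rw [hG]; simp only []; rw [hkr u x]
      exact PhotoAux.cov_main_int (fun i => z.ofLp.1 i) (fun i => u i - z.ofLp.2 i) hc
        (fun x : Fin n → ℝ => f (PhotoAux.prodCast n (x, u))) hint'
    · refine (h2p.integral_norm_prod_right).congr ?_
      filter_upwards [PhotoAux.ae_ne_pi (fun i => z.ofLp.2 i)] with u hu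
      exact hgoodnorm u hu
  -- assemble
  calc ∫ α : Fin n → ℝ,
        photoBar n (⇑f) α (WithLp.toLp 2 (fun i => α i * z.ofLp.1 i + (1 - α i) * z.ofLp.2 i) : En n)
      = ∫ α : Fin n → ℝ, ∫ u : Fin n → ℝ, Fe α u :=
        congrArg (integral volume) (funext fun α => PhotoAux.stepA n (⇑f) z α)
    _ = ∫ u : Fin n → ℝ, ∫ α : Fin n → ℝ, Fe α u := integral_integral_swap hjoint
    _ = ∫ u : Fin n → ℝ, ∫ x : Fin n → ℝ, G (x, u) := by
        refine integral_congr_ae ?_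
        filter_upwards [PhotoAux.ae_ne_pi (fun i => z.ofLp.2 i)] with u hu
        exact (hgood u hu).symm
    _ = ∫ p : (Fin n → ℝ) × (Fin n → ℝ), G p
          ∂((volume : Measure (Fin n → ℝ)).prod volume) := (integral_prod_symm G h2p).symm
    _ = ∫ w : E2n n, ((∏ i, |(z.ofLp.1 i - w.ofLp.1 i) - (z.ofLp.2 i - w.ofLp.2 i)|⁻¹ : ℝ)) • f w :=
        (PhotoAux.stepB_integral (fun w : E2n n =>
          ((∏ i, |(z.ofLp.1 i - w.ofLp.1 i) - (z.ofLp.2 i - w.ofLp.2 i)|⁻¹ : ℝ)) • f w)).symm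


end
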